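/- Define u₁(x,t) = 72 e^{2(x+8it)} ( (72+72i) e^{6(x+2it)} − (2+2i) e^{2(x+6it)} + 72i e^{8x} − i ) and u₂(x,t) = −36 e^{4x} ( 18 e^{4(x+3it)} + (8−8i) e^{2x+24it} + 9 e^{12it} + (8+8i) e^{2x} ) + 2592 e^{12(x+it)} + e^{12it}, for x, t ∈ ℝ. Then at every point (x,t) with u₂(x,t) ≠ 0, the function u = u₁/u₂ satisfies the defocusing NLS equation i ∂_t u + ∂_x² u − 2|u|² u = 0. -/

import Mathlib

open Complex Set

noncomputable section

/-- Numerator of the exact solution generated with poles `k₁ = i/2`, `k₂ = i` and residue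
data `c₁ = 1`, `c₂ = 1+i`. -/
def u₁ (x t : ℝ) : ℂ :=
  72 * Complex.exp (2 * ((x : ℂ) + 8 * Complex.I * t)) *
    ((72 + 72 * Complex.I) * Complex.exp (6 * ((x : ℂ) + 2 * Complex.I * t)) -
      (2 + 2 * Complex.I) * Complex.exp (2 * ((x : ℂ) + 6 * Complex.I * t)) +
      72 * Complex.I * Complex.exp (8 * (x : ℂ)) - Complex.I)

/-- Denominator of the exact solution generated with poles `k₁ = i/2`, `k₂ = i` and
residue data `c₁ = 1`, `c₂ = 1+i`. -/
def u₂ (x t : ℝ) : ℂ :=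
  -36 * Complex.exp (4 * (x : ℂ)) *
      (18 * Complex.exp (4 * ((x : ℂ) + 3 * Complex.I * t)) +
        (8 - 8 * Complex.I) * Complex.exp (2 * (x : ℂ) + 24 * Complex.I * t) +
        9 * Complex.exp (12 * Complex.I * t) +
        (8 + 8 * Complex.I) * Complex.exp (2 * (x : ℂ))) +
    2592 * Complex.exp (12 * ((x : ℂ) + Complex.I * t)) +
    Complex.exp (12 * Complex.I * t)

lemma hasDerivAt_A (y : ℝ) :
    HasDerivAt (fun z : ℝ => Complex.exp (↑z : ℂ)) (Complex.exp (↑y : ℂ)) y := by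
  have h : HasDerivAt (fun z : ℝ => (↑z : ℂ)) 1 y := by
    simpa using (hasDerivAt_id y).ofReal_comp
  simpa using h.cexp

lemma hasDerivAt_B (s : ℝ) :
    HasDerivAt (fun w : ℝ => Complex.exp (Complex.I * (↑w : ℂ)))
      (Complex.I * Complex.exp (Complex.I * (↑s : ℂ))) s := by
  have h : HasDerivAt (fun w : ℝ => Complex.I * (↑w : ℂ)) Complex.I s := by
    simpa using (Complex.ofRealCLM.hasDerivAt (x := s)).const_mul Complex.I
  simpa [mul_comm] using h.cexp

lemma hasDerivAt_powc {f : ℝ → ℂ} {f' : ℂ} {x : ℝ} (hf : HasDerivAt f f' x) :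
    ∀ n : ℕ, HasDerivAt (fun y => f y ^ n) ((n : ℂ) * f x ^ (n - 1) * f') x
  | 0 => by simpa using hasDerivAt_const x (1 : ℂ)
  | 1 => by simpa using hf
  | (k + 2) => by
    have h : HasDerivAt (fun y => f y ^ (k + 2))
        ((((k + 1 : ℕ) : ℂ) * f x ^ (k + 1 - 1) * f') * f x + f x ^ (k + 1) * f') x := by
      have hfun : (fun y => f y ^ (k + 2)) = (fun y => f y ^ (k + 1) * f y) := by
        funext y; rw [pow_succ]
      rw [hfun]
      exact (hasDerivAt_powc hf (k + 1)).mul hf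
    have hval : (((k + 1 : ℕ) : ℂ) * f x ^ (k + 1 - 1) * f') * f x + f x ^ (k + 1) * f'
        = ((k + 2 : ℕ) : ℂ) * f x ^ (k + 2 - 1) * f' := by
      push_cast
      show ((k : ℂ) + 1) * f x ^ k * f' * f x + f x ^ (k + 1) * f'
          = ((k : ℂ) + 2) * f x ^ (k + 1) * f'
      rw [pow_succ]
      ring
    rw [hval] at h
    exact h

lemma exp_mn (m n : ℕ) (z w : ℂ) :
    Complex.exp ((m : ℂ) * z + (n : ℂ) * w) = Complex.exp z ^ m * Complex.exp w ^ n := by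
  rw [Complex.exp_add, Complex.exp_nat_mul, Complex.exp_nat_mul]

def NP (a b : ℂ) : ℂ :=
  ((5184) + (5184) * Complex.I) * a ^ 8 * b ^ 28 + ((-144) + (-144) * Complex.I) * a ^ 4 * b ^ 28 + ((5184) * Complex.I) * a ^ 10 * b ^ 16 + ((-72) * Complex.I) * a ^ 2 * b ^ 16

def NXP (a b : ℂ) : ℂ :=
  ((41472) + (41472) * Complex.I) * a ^ 8 * b ^ 28 + ((-576) + (-576) * Complex.I) * a ^ 4 * b ^ 28 + ((51840) * Complex.I) * a ^ 10 * b ^ 16 + ((-144) * Complex.I) * a ^ 2 * b ^ 16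

def NXXP (a b : ℂ) : ℂ :=
  ((331776) + (331776) * Complex.I) * a ^ 8 * b ^ 28 + ((-2304) + (-2304) * Complex.I) * a ^ 4 * b ^ 28 + ((518400) * Complex.I) * a ^ 10 * b ^ 16 + ((-288) * Complex.I) * a ^ 2 * b ^ 16

def NTP (a b : ℂ) : ℂ :=
  ((-145152) + (145152) * Complex.I) * a ^ 8 * b ^ 28 + ((4032) + (-4032) * Complex.I) * a ^ 4 * b ^ 28 + (-82944) * a ^ 10 * b ^ 16 + (1152) * a ^ 2 * b ^ 16

def DP (a b : ℂ) : ℂ :=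
  (-648) * a ^ 8 * b ^ 12 + ((-288) + (288) * Complex.I) * a ^ 6 * b ^ 24 + (-324) * a ^ 4 * b ^ 12 + ((-288) + (-288) * Complex.I) * a ^ 6 * b ^ 0 + (2592) * a ^ 12 * b ^ 12 + (1) * a ^ 0 * b ^ 12

def DXP (a b : ℂ) : ℂ :=
  (-5184) * a ^ 8 * b ^ 12 + ((-1728) + (1728) * Complex.I) * a ^ 6 * b ^ 24 + (-1296) * a ^ 4 * b ^ 12 + ((-1728) + (-1728) * Complex.I) * a ^ 6 * b ^ 0 + (31104) * a ^ 12 * b ^ 12 + (0) * a ^ 0 * b ^ 12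

def DXXP (a b : ℂ) : ℂ :=
  (-41472) * a ^ 8 * b ^ 12 + ((-10368) + (10368) * Complex.I) * a ^ 6 * b ^ 24 + (-5184) * a ^ 4 * b ^ 12 + ((-10368) + (-10368) * Complex.I) * a ^ 6 * b ^ 0 + (373248) * a ^ 12 * b ^ 12 + (0) * a ^ 0 * b ^ 12

def DTP (a b : ℂ) : ℂ :=
  ((-7776) * Complex.I) * a ^ 8 * b ^ 12 + ((-6912) + (-6912) * Complex.I) * a ^ 6 * b ^ 24 + ((-3888) * Complex.I) * a ^ 4 * b ^ 12 + (0) * a ^ 6 * b ^ 0 + ((31104) * Complex.I) * a ^ 12 * b ^ 12 + ((12) * Complex.I) * a ^ 0 * b ^ 12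

def NCP (a b : ℂ) : ℂ :=
  ((5184) + (-5184) * Complex.I) * a ^ 8 * b ^ 0 + ((-144) + (144) * Complex.I) * a ^ 4 * b ^ 0 + ((-5184) * Complex.I) * a ^ 10 * b ^ 12 + ((72) * Complex.I) * a ^ 2 * b ^ 12

def DCP (a b : ℂ) : ℂ :=
  (-648) * a ^ 8 * b ^ 12 + ((-288) + (-288) * Complex.I) * a ^ 6 * b ^ 0 + (-324) * a ^ 4 * b ^ 12 + ((-288) + (288) * Complex.I) * a ^ 6 * b ^ 24 + (2592) * a ^ 12 * b ^ 12 + (1) * a ^ 0 * b ^ 12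

lemma Lx_NP (b : ℂ) (y : ℝ) :
    HasDerivAt (fun z : ℝ => NP (Complex.exp (↑z : ℂ)) b) (NXP (Complex.exp (↑y : ℂ)) b) y := by
  have h := (((((hasDerivAt_powc (hasDerivAt_A y) 8).const_mul ((5184) + (5184) * Complex.I)).mul_const (b ^ 28)).add (((hasDerivAt_powc (hasDerivAt_A y) 4).const_mul ((-144) + (-144) * Complex.I)).mul_const (b ^ 28))).add (((hasDerivAt_powc (hasDerivAt_A y) 10).const_mul ((5184) * Complex.I)).mul_const (b ^ 16))).add (((hasDerivAt_powc (hasDerivAt_A y) 2).const_mul ((-72) * Complex.I)).mul_const (b ^ 16))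
  have hval : ((5184) + (5184) * Complex.I) * (((8 : ℕ) : ℂ) * Complex.exp (↑y : ℂ) ^ 7 * Complex.exp (↑y : ℂ)) * b ^ 28 + ((-144) + (-144) * Complex.I) * (((4 : ℕ) : ℂ) * Complex.exp (↑y : ℂ) ^ 3 * Complex.exp (↑y : ℂ)) * b ^ 28 + ((5184) * Complex.I) * (((10 : ℕ) : ℂ) * Complex.exp (↑y : ℂ) ^ 9 * Complex.exp (↑y : ℂ)) * b ^ 16 + ((-72) * Complex.I) * (((2 : ℕ) : ℂ) * Complex.exp (↑y : ℂ) ^ 1 * Complex.exp (↑y : ℂ)) * b ^ 16 = NXP (Complex.exp (↑y : ℂ)) b := by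
    simp only [NXP]; push_cast; ring
  rw [← hval]; exact h

lemma Lx_NXP (b : ℂ) (y : ℝ) :
    HasDerivAt (fun z : ℝ => NXP (Complex.exp (↑z : ℂ)) b) (NXXP (Complex.exp (↑y : ℂ)) b) y := by
  have h := (((((hasDerivAt_powc (hasDerivAt_A y) 8).const_mul ((41472) + (41472) * Complex.I)).mul_const (b ^ 28)).add (((hasDerivAt_powc (hasDerivAt_A y) 4).const_mul ((-576) + (-576) * Complex.I)).mul_const (b ^ 28))).add (((hasDerivAt_powc (hasDerivAt_A y) 10).const_mul ((51840) * Complex.I)).mul_const (b ^ 16))).add (((hasDerivAt_powc (hasDerivAt_A y) 2).const_mul ((-144) * Complex.I)).mul_const (b ^ 16))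
  have hval : ((41472) + (41472) * Complex.I) * (((8 : ℕ) : ℂ) * Complex.exp (↑y : ℂ) ^ 7 * Complex.exp (↑y : ℂ)) * b ^ 28 + ((-576) + (-576) * Complex.I) * (((4 : ℕ) : ℂ) * Complex.exp (↑y : ℂ) ^ 3 * Complex.exp (↑y : ℂ)) * b ^ 28 + ((51840) * Complex.I) * (((10 : ℕ) : ℂ) * Complex.exp (↑y : ℂ) ^ 9 * Complex.exp (↑y : ℂ)) * b ^ 16 + ((-144) * Complex.I) * (((2 : ℕ) : ℂ) * Complex.exp (↑y : ℂ) ^ 1 * Complex.exp (↑y : ℂ)) * b ^ 16 = NXXP (Complex.exp (↑y : ℂ)) b := by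
    simp only [NXXP]; push_cast; ring
  rw [← hval]; exact h

lemma Lx_DP (b : ℂ) (y : ℝ) :
    HasDerivAt (fun z : ℝ => DP (Complex.exp (↑z : ℂ)) b) (DXP (Complex.exp (↑y : ℂ)) b) y := by
  have h := (((((((hasDerivAt_powc (hasDerivAt_A y) 8).const_mul (-648)).mul_const (b ^ 12)).add (((hasDerivAt_powc (hasDerivAt_A y) 6).const_mul ((-288) + (288) * Complex.I)).mul_const (b ^ 24))).add (((hasDerivAt_powc (hasDerivAt_A y) 4).const_mul (-324)).mul_const (b ^ 12))).add (((hasDerivAt_powc (hasDerivAt_A y) 6).const_mul ((-288) + (-288) * Complex.I)).mul_const (b ^ 0))).add (((hasDerivAt_powc (hasDerivAt_A y) 12).const_mul (2592)).mul_const (b ^ 12))).add (((hasDerivAt_powc (hasDerivAt_A y) 0).const_mul (1)).mul_const (b ^ 12))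
  have hval : (-648) * (((8 : ℕ) : ℂ) * Complex.exp (↑y : ℂ) ^ 7 * Complex.exp (↑y : ℂ)) * b ^ 12 + ((-288) + (288) * Complex.I) * (((6 : ℕ) : ℂ) * Complex.exp (↑y : ℂ) ^ 5 * Complex.exp (↑y : ℂ)) * b ^ 24 + (-324) * (((4 : ℕ) : ℂ) * Complex.exp (↑y : ℂ) ^ 3 * Complex.exp (↑y : ℂ)) * b ^ 12 + ((-288) + (-288) * Complex.I) * (((6 : ℕ) : ℂ) * Complex.exp (↑y : ℂ) ^ 5 * Complex.exp (↑y : ℂ)) * b ^ 0 + (2592) * (((12 : ℕ) : ℂ) * Complex.exp (↑y : ℂ) ^ 11 * Complex.exp (↑y : ℂ)) * b ^ 12 + (1) * (((0 : ℕ) : ℂ) * Complex.exp (↑y : ℂ) ^ 0 * Complex.exp (↑y : ℂ)) * b ^ 12 = DXP (Complex.exp (↑y : ℂ)) b := by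
    simp only [DXP]; push_cast; ring
  rw [← hval]; exact h

lemma Lx_DXP (b : ℂ) (y : ℝ) :
    HasDerivAt (fun z : ℝ => DXP (Complex.exp (↑z : ℂ)) b) (DXXP (Complex.exp (↑y : ℂ)) b) y := by
  have h := (((((((hasDerivAt_powc (hasDerivAt_A y) 8).const_mul (-5184)).mul_const (b ^ 12)).add (((hasDerivAt_powc (hasDerivAt_A y) 6).const_mul ((-1728) + (1728) * Complex.I)).mul_const (b ^ 24))).add (((hasDerivAt_powc (hasDerivAt_A y) 4).const_mul (-1296)).mul_const (b ^ 12))).add (((hasDerivAt_powc (hasDerivAt_A y) 6).const_mul ((-1728) + (-1728) * Complex.I)).mul_const (b ^ 0))).add (((hasDerivAt_powc (hasDerivAt_A y) 12).const_mul (31104)).mul_const (b ^ 12))).add (((hasDerivAt_powc (hasDerivAt_A y) 0).const_mul (0)).mul_const (b ^ 12))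
  have hval : (-5184) * (((8 : ℕ) : ℂ) * Complex.exp (↑y : ℂ) ^ 7 * Complex.exp (↑y : ℂ)) * b ^ 12 + ((-1728) + (1728) * Complex.I) * (((6 : ℕ) : ℂ) * Complex.exp (↑y : ℂ) ^ 5 * Complex.exp (↑y : ℂ)) * b ^ 24 + (-1296) * (((4 : ℕ) : ℂ) * Complex.exp (↑y : ℂ) ^ 3 * Complex.exp (↑y : ℂ)) * b ^ 12 + ((-1728) + (-1728) * Complex.I) * (((6 : ℕ) : ℂ) * Complex.exp (↑y : ℂ) ^ 5 * Complex.exp (↑y : ℂ)) * b ^ 0 + (31104) * (((12 : ℕ) : ℂ) * Complex.exp (↑y : ℂ) ^ 11 * Complex.exp (↑y : ℂ)) * b ^ 12 + (0) * (((0 : ℕ) : ℂ) * Complex.exp (↑y : ℂ) ^ 0 * Complex.exp (↑y : ℂ)) * b ^ 12 = DXXP (Complex.exp (↑y : ℂ)) b := by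
    simp only [DXXP]; push_cast; ring
  rw [← hval]; exact h

lemma Lt_NP (a : ℂ) (s : ℝ) :
    HasDerivAt (fun w : ℝ => NP a (Complex.exp (Complex.I * (↑w : ℂ)))) (NTP a (Complex.exp (Complex.I * (↑s : ℂ)))) s := by
  have h := ((((hasDerivAt_powc (hasDerivAt_B s) 28).const_mul (((5184) + (5184) * Complex.I) * a ^ 8)).add ((hasDerivAt_powc (hasDerivAt_B s) 28).const_mul (((-144) + (-144) * Complex.I) * a ^ 4))).add ((hasDerivAt_powc (hasDerivAt_B s) 16).const_mul (((5184) * Complex.I) * a ^ 10))).add ((hasDerivAt_powc (hasDerivAt_B s) 16).const_mul (((-72) * Complex.I) * a ^ 2))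
  have hval : ((5184) + (5184) * Complex.I) * a ^ 8 * (((28 : ℕ) : ℂ) * Complex.exp (Complex.I * (↑s : ℂ)) ^ 27 * (Complex.I * Complex.exp (Complex.I * (↑s : ℂ)))) + ((-144) + (-144) * Complex.I) * a ^ 4 * (((28 : ℕ) : ℂ) * Complex.exp (Complex.I * (↑s : ℂ)) ^ 27 * (Complex.I * Complex.exp (Complex.I * (↑s : ℂ)))) + ((5184) * Complex.I) * a ^ 10 * (((16 : ℕ) : ℂ) * Complex.exp (Complex.I * (↑s : ℂ)) ^ 15 * (Complex.I * Complex.exp (Complex.I * (↑s : ℂ)))) + ((-72) * Complex.I) * a ^ 2 * (((16 : ℕ) : ℂ) * Complex.exp (Complex.I * (↑s : ℂ)) ^ 15 * (Complex.I * Complex.exp (Complex.I * (↑s : ℂ)))) = NTP a (Complex.exp (Complex.I * (↑s : ℂ))) := by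
    simp only [NTP]; push_cast; ring_nf; simp only [Complex.I_sq]; try ring
  rw [← hval]; exact h

lemma Lt_DP (a : ℂ) (s : ℝ) :
    HasDerivAt (fun w : ℝ => DP a (Complex.exp (Complex.I * (↑w : ℂ)))) (DTP a (Complex.exp (Complex.I * (↑s : ℂ)))) s := by
  have h := ((((((hasDerivAt_powc (hasDerivAt_B s) 12).const_mul ((-648) * a ^ 8)).add ((hasDerivAt_powc (hasDerivAt_B s) 24).const_mul (((-288) + (288) * Complex.I) * a ^ 6))).add ((hasDerivAt_powc (hasDerivAt_B s) 12).const_mul ((-324) * a ^ 4))).add ((hasDerivAt_powc (hasDerivAt_B s) 0).const_mul (((-288) + (-288) * Complex.I) * a ^ 6))).add ((hasDerivAt_powc (hasDerivAt_B s) 12).const_mul ((2592) * a ^ 12))).add ((hasDerivAt_powc (hasDerivAt_B s) 12).const_mul ((1) * a ^ 0))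
  have hval : (-648) * a ^ 8 * (((12 : ℕ) : ℂ) * Complex.exp (Complex.I * (↑s : ℂ)) ^ 11 * (Complex.I * Complex.exp (Complex.I * (↑s : ℂ)))) + ((-288) + (288) * Complex.I) * a ^ 6 * (((24 : ℕ) : ℂ) * Complex.exp (Complex.I * (↑s : ℂ)) ^ 23 * (Complex.I * Complex.exp (Complex.I * (↑s : ℂ)))) + (-324) * a ^ 4 * (((12 : ℕ) : ℂ) * Complex.exp (Complex.I * (↑s : ℂ)) ^ 11 * (Complex.I * Complex.exp (Complex.I * (↑s : ℂ)))) + ((-288) + (-288) * Complex.I) * a ^ 6 * (((0 : ℕ) : ℂ) * Complex.exp (Complex.I * (↑s : ℂ)) ^ 0 * (Complex.I * Complex.exp (Complex.I * (↑s : ℂ)))) + (2592) * a ^ 12 * (((12 : ℕ) : ℂ) * Complex.exp (Complex.I * (↑s : ℂ)) ^ 11 * (Complex.I * Complex.exp (Complex.I * (↑s : ℂ)))) + (1) * a ^ 0 * (((12 : ℕ) : ℂ) * Complex.exp (Complex.I * (↑s : ℂ)) ^ 11 * (Complex.I * Complex.exp (Complex.I * (↑s : ℂ)))) = DTP a (Complex.exp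 (Complex.I * (↑s : ℂ))) := by
    simp only [DTP]; push_cast; ring_nf; simp only [Complex.I_sq]; try ring
  rw [← hval]; exact h

lemma u1_eq (x t : ℝ) :
    u₁ x t = NP (Complex.exp (↑x : ℂ)) (Complex.exp (Complex.I * (↑t : ℂ))) := by
  have e1 : Complex.exp (2 * ((x : ℂ) + 8 * Complex.I * (↑t : ℂ)))
      = Complex.exp (↑x : ℂ) ^ 2 * Complex.exp (Complex.I * (↑t : ℂ)) ^ 16 := by
    rw [show 2 * ((x : ℂ) + 8 * Complex.I * (↑t : ℂ))
        = ((2 : ℕ) : ℂ) * (↑x : ℂ) + ((16 : ℕ) : ℂ) * (Complex.I * (↑t : ℂ)) by push_cast; ring,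
      exp_mn]
  have e2 : Complex.exp (6 * ((x : ℂ) + 2 * Complex.I * (↑t : ℂ)))
      = Complex.exp (↑x : ℂ) ^ 6 * Complex.exp (Complex.I * (↑t : ℂ)) ^ 12 := by
    rw [show 6 * ((x : ℂ) + 2 * Complex.I * (↑t : ℂ))
        = ((6 : ℕ) : ℂ) * (↑x : ℂ) + ((12 : ℕ) : ℂ) * (Complex.I * (↑t : ℂ)) by push_cast; ring,
      exp_mn]
  have e3 : Complex.exp (2 * ((x : ℂ) + 6 * Complex.I * (↑t : ℂ)))
      = Complex.exp (↑x : ℂ) ^ 2 * Complex.exp (Complex.I * (↑t : ℂ)) ^ 12 := by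
    rw [show 2 * ((x : ℂ) + 6 * Complex.I * (↑t : ℂ))
        = ((2 : ℕ) : ℂ) * (↑x : ℂ) + ((12 : ℕ) : ℂ) * (Complex.I * (↑t : ℂ)) by push_cast; ring,
      exp_mn]
  have e4 : Complex.exp (8 * (x : ℂ))
      = Complex.exp (↑x : ℂ) ^ 8 * Complex.exp (Complex.I * (↑t : ℂ)) ^ 0 := by
    rw [show 8 * (x : ℂ)
        = ((8 : ℕ) : ℂ) * (↑x : ℂ) + ((0 : ℕ) : ℂ) * (Complex.I * (↑t : ℂ)) by push_cast; ring,
      exp_mn]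
  unfold u₁ NP
  rw [e1, e2, e3, e4]
  ring

lemma u2_eq (x t : ℝ) :
    u₂ x t = DP (Complex.exp (↑x : ℂ)) (Complex.exp (Complex.I * (↑t : ℂ))) := by
  have e5 : Complex.exp (4 * (x : ℂ))
      = Complex.exp (↑x : ℂ) ^ 4 * Complex.exp (Complex.I * (↑t : ℂ)) ^ 0 := by
    rw [show 4 * (x : ℂ)
        = ((4 : ℕ) : ℂ) * (↑x : ℂ) + ((0 : ℕ) : ℂ) * (Complex.I * (↑t : ℂ)) by push_cast; ring,
      exp_mn]
  have e6 : Complex.exp (4 * ((x : ℂ) + 3 * Complex.I * (↑t : ℂ)))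
      = Complex.exp (↑x : ℂ) ^ 4 * Complex.exp (Complex.I * (↑t : ℂ)) ^ 12 := by
    rw [show 4 * ((x : ℂ) + 3 * Complex.I * (↑t : ℂ))
        = ((4 : ℕ) : ℂ) * (↑x : ℂ) + ((12 : ℕ) : ℂ) * (Complex.I * (↑t : ℂ)) by push_cast; ring,
      exp_mn]
  have e7 : Complex.exp (2 * (x : ℂ) + 24 * Complex.I * (↑t : ℂ))
      = Complex.exp (↑x : ℂ) ^ 2 * Complex.exp (Complex.I * (↑t : ℂ)) ^ 24 := by
    rw [show 2 * (x : ℂ) + 24 * Complex.I * (↑t : ℂ)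
        = ((2 : ℕ) : ℂ) * (↑x : ℂ) + ((24 : ℕ) : ℂ) * (Complex.I * (↑t : ℂ)) by push_cast; ring,
      exp_mn]
  have e8 : Complex.exp (12 * Complex.I * (↑t : ℂ))
      = Complex.exp (↑x : ℂ) ^ 0 * Complex.exp (Complex.I * (↑t : ℂ)) ^ 12 := by
    rw [show 12 * Complex.I * (↑t : ℂ)
        = ((0 : ℕ) : ℂ) * (↑x : ℂ) + ((12 : ℕ) : ℂ) * (Complex.I * (↑t : ℂ)) by push_cast; ring,
      exp_mn]
  have e9 : Complex.exp (2 * (x : ℂ))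
      = Complex.exp (↑x : ℂ) ^ 2 * Complex.exp (Complex.I * (↑t : ℂ)) ^ 0 := by
    rw [show 2 * (x : ℂ)
        = ((2 : ℕ) : ℂ) * (↑x : ℂ) + ((0 : ℕ) : ℂ) * (Complex.I * (↑t : ℂ)) by push_cast; ring,
      exp_mn]
  have e10 : Complex.exp (12 * ((x : ℂ) + Complex.I * (↑t : ℂ)))
      = Complex.exp (↑x : ℂ) ^ 12 * Complex.exp (Complex.I * (↑t : ℂ)) ^ 12 := by
    rw [show 12 * ((x : ℂ) + Complex.I * (↑t : ℂ))
        = ((12 : ℕ) : ℂ) * (↑x : ℂ) + ((12 : ℕ) : ℂ) * (Complex.I * (↑t : ℂ)) by push_cast; ring,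
      exp_mn]
  unfold u₂ DP
  rw [e6, e7, e8, e9, e10, e5]
  ring

lemma normsq_cast (z : ℂ) : ((‖z‖ : ℝ) : ℂ) ^ 2 = z * (starRingEnd ℂ) z := by
  rw [show (((‖z‖ : ℝ)) : ℂ) ^ 2 = ((‖z‖ ^ 2 : ℝ) : ℂ) by push_cast; ring]
  rw [Complex.sq_norm]
  exact (Complex.mul_conj z).symm

lemma conj_NP (a b : ℂ) (ha : (starRingEnd ℂ) a = a) (hb2 : (starRingEnd ℂ) b * b = 1)
    (hb0 : b ≠ 0) : (starRingEnd ℂ) (NP a b) = NCP a b / b ^ 28 := by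
  rw [eq_div_iff (pow_ne_zero 28 hb0)]
  simp only [NP, NCP, map_add, map_sub, map_neg, map_mul, map_pow, map_ofNat, map_one,
    Complex.conj_I, ha]
  linear_combination (((5184) + (-5184) * Complex.I) * a ^ 8 * b ^ 0 * (((starRingEnd ℂ) b * b) ^ 0 + ((starRingEnd ℂ) b * b) ^ 1 + ((starRingEnd ℂ) b * b) ^ 2 + ((starRingEnd ℂ) b * b) ^ 3 + ((starRingEnd ℂ) b * b) ^ 4 + ((starRingEnd ℂ) b * b) ^ 5 + ((starRingEnd ℂ) b * b) ^ 6 + ((starRingEnd ℂ) b * b) ^ 7 + ((starRingEnd ℂ) b * b) ^ 8 + ((starRingEnd ℂ) b * b) ^ 9 + ((starRingEnd ℂ) b * b) ^ 10 + ((starRingEnd ℂ) b * b) ^ 11 + ((starRingEnd ℂ) b * b) ^ 12 + ((starRingEnd ℂ) b * b) ^ 13 + ((starRingEnd ℂ) b * b) ^ 14 + ((starRingEnd ℂ) b * b) ^ 15 + ((starRingEnd ℂ) b * b) ^ 16 + ((starRingEnd ℂ) b * b) ^ 17 + ((starRingEnd ℂ) b * b) ^ 18 + ((starRingEnd ℂ)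 b * b) ^ 19 + ((starRingEnd ℂ) b * b) ^ 20 + ((starRingEnd ℂ) b * b) ^ 21 + ((starRingEnd ℂ) b * b) ^ 22 + ((starRingEnd ℂ) b * b) ^ 23 + ((starRingEnd ℂ) b * b) ^ 24 + ((starRingEnd ℂ) b * b) ^ 25 + ((starRingEnd ℂ) b * b) ^ 26 + ((starRingEnd ℂ) b * b) ^ 27) + ((-144) + (144) * Complex.I) * a ^ 4 * b ^ 0 * (((starRingEnd ℂ) b * b) ^ 0 + ((starRingEnd ℂ) b * b) ^ 1 + ((starRingEnd ℂ) b * b) ^ 2 + ((starRingEnd ℂ) b * b) ^ 3 + ((starRingEnd ℂ) b * b) ^ 4 + ((starRingEnd ℂ) b * b) ^ 5 + ((starRingEnd ℂ) b * b) ^ 6 + ((starRingEnd ℂ) b * b) ^ 7 + ((starRingEnd ℂ) b * b) ^ 8 + ((starRingEnd ℂ) b * b) ^ 9 + ((starRingEnd ℂ) b * b) ^ 10 + ((starRingEnd ℂ) b * b) ^ 11 + ((starRingEnd ℂ) b * b) ^ 12 + ((starRingEnd ℂ) b * b) ^ 13 + ((starRingEnd ℂ) b * b) ^ 14 + ((starRingEnd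 ℂ) b * b) ^ 15 + ((starRingEnd ℂ) b * b) ^ 16 + ((starRingEnd ℂ) b * b) ^ 17 + ((starRingEnd ℂ) b * b) ^ 18 + ((starRingEnd ℂ) b * b) ^ 19 + ((starRingEnd ℂ) b * b) ^ 20 + ((starRingEnd ℂ) b * b) ^ 21 + ((starRingEnd ℂ) b * b) ^ 22 + ((starRingEnd ℂ) b * b) ^ 23 + ((starRingEnd ℂ) b * b) ^ 24 + ((starRingEnd ℂ) b * b) ^ 25 + ((starRingEnd ℂ) b * b) ^ 26 + ((starRingEnd ℂ) b * b) ^ 27) + ((-5184) * Complex.I) * a ^ 10 * b ^ 12 * (((starRingEnd ℂ) b * b) ^ 0 + ((starRingEnd ℂ) b * b) ^ 1 + ((starRingEnd ℂ) b * b) ^ 2 + ((starRingEnd ℂ) b * b) ^ 3 + ((starRingEnd ℂ) b * b) ^ 4 + ((starRingEnd ℂ) b * b) ^ 5 + ((starRingEnd ℂ) b * b) ^ 6 + ((starRingEnd ℂ) b * b) ^ 7 + ((starRingEnd ℂ) b * b) ^ 8 + ((starRingEnd ℂ) b * b) ^ 9 + ((starRingEnd ℂ) b * b) ^ 10 + ((starRingEnd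 ℂ) b * b) ^ 11 + ((starRingEnd ℂ) b * b) ^ 12 + ((starRingEnd ℂ) b * b) ^ 13 + ((starRingEnd ℂ) b * b) ^ 14 + ((starRingEnd ℂ) b * b) ^ 15) + ((72) * Complex.I) * a ^ 2 * b ^ 12 * (((starRingEnd ℂ) b * b) ^ 0 + ((starRingEnd ℂ) b * b) ^ 1 + ((starRingEnd ℂ) b * b) ^ 2 + ((starRingEnd ℂ) b * b) ^ 3 + ((starRingEnd ℂ) b * b) ^ 4 + ((starRingEnd ℂ) b * b) ^ 5 + ((starRingEnd ℂ) b * b) ^ 6 + ((starRingEnd ℂ) b * b) ^ 7 + ((starRingEnd ℂ) b * b) ^ 8 + ((starRingEnd ℂ) b * b) ^ 9 + ((starRingEnd ℂ) b * b) ^ 10 + ((starRingEnd ℂ) b * b) ^ 11 + ((starRingEnd ℂ) b * b) ^ 12 + ((starRingEnd ℂ) b * b) ^ 13 + ((starRingEnd ℂ) b * b) ^ 14 + ((starRingEnd ℂ) b * b) ^ 15)) * hb2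

lemma conj_DP (a b : ℂ) (ha : (starRingEnd ℂ) a = a) (hb2 : (starRingEnd ℂ) b * b = 1)
    (hb0 : b ≠ 0) : (starRingEnd ℂ) (DP a b) = DCP a b / b ^ 24 := by
  rw [eq_div_iff (pow_ne_zero 24 hb0)]
  simp only [DP, DCP, map_add, map_sub, map_neg, map_mul, map_pow, map_ofNat, map_one,
    Complex.conj_I, ha]
  linear_combination ((-648) * a ^ 8 * b ^ 12 * (((starRingEnd ℂ) b * b) ^ 0 + ((starRingEnd ℂ) b * b) ^ 1 + ((starRingEnd ℂ) b * b) ^ 2 + ((starRingEnd ℂ) b * b) ^ 3 + ((starRingEnd ℂ) b * b) ^ 4 + ((starRingEnd ℂ) b * b) ^ 5 + ((starRingEnd ℂ) b * b) ^ 6 + ((starRingEnd ℂ) b * b) ^ 7 + ((starRingEnd ℂ) b * b) ^ 8 + ((starRingEnd ℂ) b * b) ^ 9 + ((starRingEnd ℂ) b * b) ^ 10 + ((starRingEnd ℂ) b * b) ^ 11) + ((-288) + (-288) * Complex.I) * a ^ 6 * b ^ 0 * (((starRingEnd ℂ) b * b) ^ 0 + ((starRingEnd ℂ) b * b) ^ 1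 + ((starRingEnd ℂ) b * b) ^ 2 + ((starRingEnd ℂ) b * b) ^ 3 + ((starRingEnd ℂ) b * b) ^ 4 + ((starRingEnd ℂ) b * b) ^ 5 + ((starRingEnd ℂ) b * b) ^ 6 + ((starRingEnd ℂ) b * b) ^ 7 + ((starRingEnd ℂ) b * b) ^ 8 + ((starRingEnd ℂ) b * b) ^ 9 + ((starRingEnd ℂ) b * b) ^ 10 + ((starRingEnd ℂ) b * b) ^ 11 + ((starRingEnd ℂ) b * b) ^ 12 + ((starRingEnd ℂ) b * b) ^ 13 + ((starRingEnd ℂ) b * b) ^ 14 + ((starRingEnd ℂ) b * b) ^ 15 + ((starRingEnd ℂ) b * b) ^ 16 + ((starRingEnd ℂ) b * b) ^ 17 + ((starRingEnd ℂ) b * b) ^ 18 + ((starRingEnd ℂ) b * b) ^ 19 + ((starRingEnd ℂ) b * b) ^ 20 + ((starRingEnd ℂ) b * b) ^ 21 + ((starRingEnd ℂ) b * b) ^ 22 + ((starRingEnd ℂ) b * b) ^ 23) + (-324) * a ^ 4 * b ^ 12 * (((starRingEnd ℂ) b * b) ^ 0 + ((starRingEnd ℂ) b * b) ^ 1 + ((starRingEnd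 ℂ) b * b) ^ 2 + ((starRingEnd ℂ) b * b) ^ 3 + ((starRingEnd ℂ) b * b) ^ 4 + ((starRingEnd ℂ) b * b) ^ 5 + ((starRingEnd ℂ) b * b) ^ 6 + ((starRingEnd ℂ) b * b) ^ 7 + ((starRingEnd ℂ) b * b) ^ 8 + ((starRingEnd ℂ) b * b) ^ 9 + ((starRingEnd ℂ) b * b) ^ 10 + ((starRingEnd ℂ) b * b) ^ 11) + (2592) * a ^ 12 * b ^ 12 * (((starRingEnd ℂ) b * b) ^ 0 + ((starRingEnd ℂ) b * b) ^ 1 + ((starRingEnd ℂ) b * b) ^ 2 + ((starRingEnd ℂ) b * b) ^ 3 + ((starRingEnd ℂ) b * b) ^ 4 + ((starRingEnd ℂ) b * b) ^ 5 + ((starRingEnd ℂ) b * b) ^ 6 + ((starRingEnd ℂ) b * b) ^ 7 + ((starRingEnd ℂ) b * b) ^ 8 + ((starRingEnd ℂ) b * b) ^ 9 + ((starRingEnd ℂ) b * b) ^ 10 + ((starRingEnd ℂ) b * b) ^ 11) + (1) * a ^ 0 * b ^ 12 * (((starRingEnd ℂ) b * b) ^ 0 + ((starRingEnd ℂ) b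 * b) ^ 1 + ((starRingEnd ℂ) b * b) ^ 2 + ((starRingEnd ℂ) b * b) ^ 3 + ((starRingEnd ℂ) b * b) ^ 4 + ((starRingEnd ℂ) b * b) ^ 5 + ((starRingEnd ℂ) b * b) ^ 6 + ((starRingEnd ℂ) b * b) ^ 7 + ((starRingEnd ℂ) b * b) ^ 8 + ((starRingEnd ℂ) b * b) ^ 9 + ((starRingEnd ℂ) b * b) ^ 10 + ((starRingEnd ℂ) b * b) ^ 11)) * hb2

lemma key (n d nt dt nx dx nxx dxx nc dc b : ℂ) (hd : d ≠ 0) (hdc : dc ≠ 0) (hb : b ≠ 0)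
    (hpoly : Complex.I * ((nt * d - n * dt) * (d * dc * b ^ 4))
        + ((nxx * d - n * dxx) * d - (nx * d - n * dx) * (2 * dx)) * (dc * b ^ 4)
        - 2 * n ^ 2 * nc * d = 0) :
    Complex.I * ((nt * d - n * dt) / d ^ 2)
      + ((nxx * d - n * dxx) * d ^ 2 - (nx * d - n * dx) * (2 * d * dx)) / d ^ 4
      - 2 * (n / d * (nc / b ^ 28 / (dc / b ^ 24))) * (n / d) = 0 := by
  have e3 : n / d * (nc / b ^ 28 / (dc / b ^ 24)) = n * nc / (d * dc * b ^ 4) := by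
    rw [div_div_div_eq, div_mul_div_comm,
      div_eq_div_iff (by simp [hd, hdc, hb, pow_ne_zero]) (by simp [hd, hdc, hb, pow_ne_zero])]
    ring
  rw [e3]
  field_simp
  linear_combination hpoly

set_option maxHeartbeats 4000000 in
lemma hpoly_all (a b : ℂ) :
    Complex.I * ((NTP a b * DP a b - NP a b * DTP a b) * (DP a b * DCP a b * b ^ 4))
      + ((NXXP a b * DP a b - NP a b * DXXP a b) * DP a b
          - (NXP a b * DP a b - NP a b * DXP a b) * (2 * DXP a b)) * (DCP a b * b ^ 4)
      - 2 * NP a b ^ 2 * NCP a b * DP a b = 0 := by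
  simp only [NP, DP, NTP, DTP, NXP, DXP, NXXP, DXXP, NCP, DCP]
  linear_combination ((864) * a ^ 2 * b ^ 56 * Complex.I ^ 1 + (-2304) * a ^ 4 * b ^ 68 + (1728) * a ^ 4 * b ^ 68 * Complex.I ^ 1 + (-1586304) * a ^ 6 * b ^ 56 * Complex.I ^ 1 + (-1990656) * a ^ 8 * b ^ 44 * Complex.I ^ 1 + (-497664) * a ^ 8 * b ^ 44 * Complex.I ^ 2 + (331776) * a ^ 8 * b ^ 68 + (-5723136) * a ^ 8 * b ^ 68 * Complex.I ^ 1 + (497664) * a ^ 8 * b ^ 68 * Complex.I ^ 2 + (-1492992) * a ^ 10 * b ^ 56 + (507741696) * a ^ 10 * b ^ 56 * Complex.I ^ 1 + (-995328) * a ^ 10 * b ^ 56 * Complex.I ^ 2 + (-1492992) * a ^ 10 * b ^ 80 + (-7464960) * a ^ 10 * b ^ 80 * Complex.I ^ 1 + (995328) * a ^ 10 * b ^ 80 * Complex.I ^ 2 + (1074954240) * a ^ 12 * b ^ 44 * Complex.I ^ 1 + (537477120) * a ^ 12 * b ^ 44 * Complex.I ^ 2 + (52254720) * a ^ 12 * b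 ^ 68 + (2530248192) * a ^ 12 * b ^ 68 * Complex.I ^ 1 + (-537477120) * a ^ 12 * b ^ 68 * Complex.I ^ 2 + (501645312) * a ^ 14 * b ^ 32 * Complex.I ^ 1 + (573308928) * a ^ 14 * b ^ 32 * Complex.I ^ 2 + (71663616) * a ^ 14 * b ^ 32 * Complex.I ^ 3 + (877879296) * a ^ 14 * b ^ 56 + (-23805757440) * a ^ 14 * b ^ 56 * Complex.I ^ 1 + (1397440512) * a ^ 14 * b ^ 56 * Complex.I ^ 2 + (-143327232) * a ^ 14 * b ^ 56 * Complex.I ^ 3 + (877879296) * a ^ 14 * b ^ 80 + (4747714560) * a ^ 14 * b ^ 80 * Complex.I ^ 1 + (-1970749440) * a ^ 14 * b ^ 80 * Complex.I ^ 2 + (71663616) * a ^ 14 * b ^ 80 * Complex.I ^ 3 + (573308928) * a ^ 16 * b ^ 44 + (-66217181184) * a ^ 16 * b ^ 44 * Complex.I ^ 1 + (-50415353856) * a ^ 16 * b ^ 44 * Complex.I ^ 2 + (143327232) * a ^ 16 * b ^ 44 * Complex.I ^ 3 + (37336743936) * a ^ 16 * b ^ 68 + (-205620830208) * a ^ 16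 * b ^ 68 * Complex.I ^ 1 + (52995244032) * a ^ 16 * b ^ 68 * Complex.I ^ 2 + (-286654464) * a ^ 16 * b ^ 68 * Complex.I ^ 3 + (573308928) * a ^ 16 * b ^ 92 + (1863254016) * a ^ 16 * b ^ 92 * Complex.I ^ 1 + (-2579890176) * a ^ 16 * b ^ 92 * Complex.I ^ 2 + (143327232) * a ^ 16 * b ^ 92 * Complex.I ^ 3 + (-38698352640) * a ^ 18 * b ^ 32 * Complex.I ^ 1 + (-61917364224) * a ^ 18 * b ^ 32 * Complex.I ^ 2 + (-23219011584) * a ^ 18 * b ^ 32 * Complex.I ^ 3 + (11609505792) * a ^ 18 * b ^ 56 + (-497031966720) * a ^ 18 * b ^ 56 * Complex.I ^ 1 + (-233050079232) * a ^ 18 * b ^ 56 * Complex.I ^ 2 + (46438023168) * a ^ 18 * b ^ 56 * Complex.I ^ 3 + (11609505792) * a ^ 18 * b ^ 80 + (-678941097984) * a ^ 18 * b ^ 80 * Complex.I ^ 1 + (294967443456) * a ^ 18 * b ^ 80 * Complex.I ^ 2 + (-23219011584) * a ^ 18 * b ^ 80 * Complex.I ^ 3 + (-345705283584) * a ^ 20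 * b ^ 44 * Complex.I ^ 1 + (-322486272000) * a ^ 20 * b ^ 44 * Complex.I ^ 2 + (-92876046336) * a ^ 20 * b ^ 44 * Complex.I ^ 3 + (-2816272613376) * a ^ 20 * b ^ 68 + (123431620608) * a ^ 20 * b ^ 68 * Complex.I ^ 1 + (-399882977280) * a ^ 20 * b ^ 68 * Complex.I ^ 2 + (185752092672) * a ^ 20 * b ^ 68 * Complex.I ^ 3 + (-629493202944) * a ^ 20 * b ^ 92 * Complex.I ^ 1 + (722369249280) * a ^ 20 * b ^ 92 * Complex.I ^ 2 + (-92876046336) * a ^ 20 * b ^ 92 * Complex.I ^ 3 + (13759414272) * a ^ 22 * b ^ 32 + (10319560704) * a ^ 22 * b ^ 32 * Complex.I ^ 1 + (41278242816) * a ^ 22 * b ^ 32 * Complex.I ^ 2 + (44718096384) * a ^ 22 * b ^ 32 * Complex.I ^ 3 + (-4329055715328) * a ^ 22 * b ^ 56 + (-1723689123840) * a ^ 22 * b ^ 56 * Complex.I ^ 1 + (2466375008256) * a ^ 22 * b ^ 56 * Complex.I ^ 2 + (-268308578304) * a ^ 22 * b ^ 56 * Complex.I ^ 3 + (-4329055715328)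 * a ^ 22 * b ^ 80 + (15432903032832) * a ^ 22 * b ^ 80 * Complex.I ^ 1 + (-2879157436416) * a ^ 22 * b ^ 80 * Complex.I ^ 2 + (402462867456) * a ^ 22 * b ^ 80 * Complex.I ^ 3 + (13759414272) * a ^ 22 * b ^ 104 + (-206391214080) * a ^ 22 * b ^ 104 * Complex.I ^ 1 + (371504185344) * a ^ 22 * b ^ 104 * Complex.I ^ 2 + (-178872385536) * a ^ 22 * b ^ 104 * Complex.I ^ 3 + (-2105190383616) * a ^ 24 * b ^ 44 + (-1052595191808) * a ^ 24 * b ^ 44 * Complex.I ^ 1 + (131574398976) * a ^ 24 * b ^ 44 * Complex.I ^ 2 + (1578892787712) * a ^ 24 * b ^ 44 * Complex.I ^ 3 + (-8157612736512) * a ^ 24 * b ^ 68 + (47300996431872) * a ^ 24 * b ^ 68 * Complex.I ^ 1 + (19867734245376) * a ^ 24 * b ^ 68 * Complex.I ^ 2 + (-3157785575424) * a ^ 24 * b ^ 68 * Complex.I ^ 3 + (-2105190383616) * a ^ 24 * b ^ 92 + (20525606240256) * a ^ 24 * b ^ 92 * Complex.I ^ 1 + (-19999308644352) * a ^ 24 *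 b ^ 92 * Complex.I ^ 2 + (1578892787712) * a ^ 24 * b ^ 92 * Complex.I ^ 3 + (-495338913792) * a ^ 26 * b ^ 32 + (-371504185344) * a ^ 26 * b ^ 32 * Complex.I ^ 1 + (-1486016741376) * a ^ 26 * b ^ 32 * Complex.I ^ 2 + (-1609851469824) * a ^ 26 * b ^ 32 * Complex.I ^ 3 + (-1648549822464) * a ^ 26 * b ^ 56 + (50803197345792) * a ^ 26 * b ^ 56 * Complex.I ^ 1 + (46205833052160) * a ^ 26 * b ^ 56 * Complex.I ^ 2 + (9659108818944) * a ^ 26 * b ^ 56 * Complex.I ^ 3 + (-1648549822464) * a ^ 26 * b ^ 80 + (96892935340032) * a ^ 26 * b ^ 80 * Complex.I ^ 1 + (-31345665638400) * a ^ 26 * b ^ 80 * Complex.I ^ 2 + (-14488663228416) * a ^ 26 * b ^ 80 * Complex.I ^ 3 + (-495338913792) * a ^ 26 * b ^ 104 + (7430083706880) * a ^ 26 * b ^ 104 * Complex.I ^ 1 + (-13374150672384) * a ^ 26 * b ^ 104 * Complex.I ^ 2 + (6439405879296) * a ^ 26 * b ^ 104 * Complex.I ^ 3 + (24890780418048) *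 a ^ 28 * b ^ 44 * Complex.I ^ 1 + (23219011584000) * a ^ 28 * b ^ 44 * Complex.I ^ 2 + (6687075336192) * a ^ 28 * b ^ 44 * Complex.I ^ 3 + (-22220594085888) * a ^ 28 * b ^ 68 + (2362534428672) * a ^ 28 * b ^ 68 * Complex.I ^ 1 + (28791574364160) * a ^ 28 * b ^ 68 * Complex.I ^ 2 + (-13374150672384) * a ^ 28 * b ^ 68 * Complex.I ^ 3 + (45323510611968) * a ^ 28 * b ^ 92 * Complex.I ^ 1 + (-52010585948160) * a ^ 28 * b ^ 92 * Complex.I ^ 2 + (6687075336192) * a ^ 28 * b ^ 92 * Complex.I ^ 3 + (5572562780160) * a ^ 30 * b ^ 32 * Complex.I ^ 1 + (8916100448256) * a ^ 30 * b ^ 32 * Complex.I ^ 2 + (3343537668096) * a ^ 30 * b ^ 32 * Complex.I ^ 3 + (-91668657733632) * a ^ 30 * b ^ 56 + (-254666119053312) * a ^ 30 * b ^ 56 * Complex.I ^ 1 + (-106435949101056) * a ^ 30 * b ^ 56 * Complex.I ^ 2 + (-6687075336192) * a ^ 30 * b ^ 56 * Complex.I ^ 3 + (-91668657733632) * a ^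 30 * b ^ 80 + (-272219691810816) * a ^ 30 * b ^ 80 * Complex.I ^ 1 + (97519848652800) * a ^ 30 * b ^ 80 * Complex.I ^ 2 + (3343537668096) * a ^ 30 * b ^ 80 * Complex.I ^ 3 + (-53496602689536) * a ^ 32 * b ^ 44 + (-300918390128640) * a ^ 32 * b ^ 44 * Complex.I ^ 1 + (-155474501566464) * a ^ 32 * b ^ 44 * Complex.I ^ 2 + (-13374150672384) * a ^ 32 * b ^ 44 * Complex.I ^ 3 + (-244078249771008) * a ^ 32 * b ^ 68 + (-1062409094037504) * a ^ 32 * b ^ 68 * Complex.I ^ 1 + (-85260210536448) * a ^ 32 * b ^ 68 * Complex.I ^ 2 + (26748301344768) * a ^ 32 * b ^ 68 * Complex.I ^ 3 + (-53496602689536) * a ^ 32 * b ^ 92 + (-173863958740992) * a ^ 32 * b ^ 92 * Complex.I ^ 1 + (240734712102912) * a ^ 32 * b ^ 92 * Complex.I ^ 2 + (-13374150672384) * a ^ 32 * b ^ 92 * Complex.I ^ 3 + (-93619054706688) * a ^ 34 * b ^ 32 * Complex.I ^ 1 + (-106993205379072) * a ^ 34 * b ^ 32 * Complex.I ^ 2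 + (-13374150672384) * a ^ 34 * b ^ 32 * Complex.I ^ 3 + (-163833345736704) * a ^ 34 * b ^ 56 + (-1024585324167168) * a ^ 34 * b ^ 56 * Complex.I ^ 1 + (-260795938111488) * a ^ 34 * b ^ 56 * Complex.I ^ 2 + (26748301344768) * a ^ 34 * b ^ 56 * Complex.I ^ 3 + (-163833345736704) * a ^ 34 * b ^ 80 + (-886037482045440) * a ^ 34 * b ^ 80 * Complex.I ^ 1 + (367789143490560) * a ^ 34 * b ^ 80 * Complex.I ^ 2 + (-13374150672384) * a ^ 34 * b ^ 80 * Complex.I ^ 3 + (-401224520171520) * a ^ 36 * b ^ 44 * Complex.I ^ 1 + (-200612260085760) * a ^ 36 * b ^ 44 * Complex.I ^ 2 + (160489808068608) * a ^ 36 * b ^ 68 + (180551034077184) * a ^ 36 * b ^ 68 * Complex.I ^ 1 + (200612260085760) * a ^ 36 * b ^ 68 * Complex.I ^ 2 + (361102068154368) * a ^ 38 * b ^ 56 + (1120921003229184) * a ^ 38 * b ^ 56 * Complex.I ^ 1 + (240734712102912) * a ^ 38 * b ^ 56 * Complex.I ^ 2 + (361102068154368) * a ^ 38 * b ^ 80 +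 (1805510340771840) * a ^ 38 * b ^ 80 * Complex.I ^ 1 + (-240734712102912) * a ^ 38 * b ^ 80 * Complex.I ^ 2 + (962938848411648) * a ^ 40 * b ^ 44 * Complex.I ^ 1 + (240734712102912) * a ^ 40 * b ^ 44 * Complex.I ^ 2 + (-160489808068608) * a ^ 40 * b ^ 68 + (2768449189183488) * a ^ 40 * b ^ 68 * Complex.I ^ 1 + (-240734712102912) * a ^ 40 * b ^ 68 * Complex.I ^ 2 + (1534683789656064) * a ^ 42 * b ^ 56 * Complex.I ^ 1 + (1444408272617472) * a ^ 44 * b ^ 68 + (-1083306204463104) * a ^ 44 * b ^ 68 * Complex.I ^ 1 + (-1083306204463104) * a ^ 46 * b ^ 56 * Complex.I ^ 1) * Complex.I_sq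

set_option maxHeartbeats 1000000 in
/-- At every point where `u₂ ≠ 0`, the quotient `u = u₁/u₂` satisfies the defocusing NLS
equation `i u_t + u_xx - 2|u|²u = 0`. -/
theorem ratio_solution_satisfies_NLS :
    ∀ x t : ℝ, u₂ x t ≠ 0 →
      Complex.I * deriv (fun s => u₁ x s / u₂ x s) t
        + deriv (fun y => deriv (fun z => u₁ z t / u₂ z t) y) x
        - 2 * (‖u₁ x t / u₂ x t‖ : ℂ) ^ 2 * (u₁ x t / u₂ x t) = 0 := by
  intro x t h0
  have hb0 : Complex.exp (Complex.I * (↑t : ℂ)) ≠ 0 := Complex.exp_ne_zero _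
  have hD : DP (Complex.exp (↑x : ℂ)) (Complex.exp (Complex.I * (↑t : ℂ))) ≠ 0 := by
    rw [← u2_eq]; exact h0
  have hca : (starRingEnd ℂ) (Complex.exp (↑x : ℂ)) = Complex.exp (↑x : ℂ) := by
    rw [← Complex.exp_conj, Complex.conj_ofReal]
  have hcb : (starRingEnd ℂ) (Complex.exp (Complex.I * (↑t : ℂ)))
      = (Complex.exp (Complex.I * (↑t : ℂ)))⁻¹ := by
    rw [← Complex.exp_conj, ← Complex.exp_neg]
    congr 1
    rw [map_mul, Complex.conj_I, Complex.conj_ofReal]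
    ring
  have hb2 : (starRingEnd ℂ) (Complex.exp (Complex.I * (↑t : ℂ)))
      * Complex.exp (Complex.I * (↑t : ℂ)) = 1 := by
    rw [hcb]; exact inv_mul_cancel₀ hb0
  have h1 : deriv (fun s => u₁ x s / u₂ x s) t
      = (NTP (Complex.exp (↑x : ℂ)) (Complex.exp (Complex.I * (↑t : ℂ)))
            * DP (Complex.exp (↑x : ℂ)) (Complex.exp (Complex.I * (↑t : ℂ)))
          - NP (Complex.exp (↑x : ℂ)) (Complex.exp (Complex.I * (↑t : ℂ)))
            * DTP (Complex.exp (↑x : ℂ)) (Complex.exp (Complex.I * (↑t : ℂ))))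
        / DP (Complex.exp (↑x : ℂ)) (Complex.exp (Complex.I * (↑t : ℂ))) ^ 2 := by
    have hfun : (fun s : ℝ => u₁ x s / u₂ x s)
        = (fun s : ℝ => NP (Complex.exp (↑x : ℂ)) (Complex.exp (Complex.I * (↑s : ℂ)))
            / DP (Complex.exp (↑x : ℂ)) (Complex.exp (Complex.I * (↑s : ℂ)))) := by
      funext s; rw [u1_eq, u2_eq]
    rw [hfun]
    exact ((Lt_NP (Complex.exp (↑x : ℂ)) t).div (Lt_DP (Complex.exp (↑x : ℂ)) t) hD).deriv
  have hcont : Continuous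
      (fun y : ℝ => DP (Complex.exp (↑y : ℂ)) (Complex.exp (Complex.I * (↑t : ℂ)))) := by
    unfold DP; fun_prop
  have hev : ∀ᶠ (y : ℝ) in nhds x,
      DP (Complex.exp (↑y : ℂ)) (Complex.exp (Complex.I * (↑t : ℂ))) ≠ 0 :=
    hcont.continuousAt.eventually_ne hD
  have h2 : deriv (fun y => deriv (fun z => u₁ z t / u₂ z t) y) x
      = ((NXXP (Complex.exp (↑x : ℂ)) (Complex.exp (Complex.I * (↑t : ℂ)))
              * DP (Complex.exp (↑x : ℂ)) (Complex.exp (Complex.I * (↑t : ℂ)))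
            - NP (Complex.exp (↑x : ℂ)) (Complex.exp (Complex.I * (↑t : ℂ)))
              * DXXP (Complex.exp (↑x : ℂ)) (Complex.exp (Complex.I * (↑t : ℂ))))
            * DP (Complex.exp (↑x : ℂ)) (Complex.exp (Complex.I * (↑t : ℂ))) ^ 2
          - (NXP (Complex.exp (↑x : ℂ)) (Complex.exp (Complex.I * (↑t : ℂ)))
              * DP (Complex.exp (↑x : ℂ)) (Complex.exp (Complex.I * (↑t : ℂ)))
            - NP (Complex.exp (↑x : ℂ)) (Complex.exp (Complex.I * (↑t : ℂ)))
              * DXP (Complex.exp (↑x : ℂ)) (Complex.exp (Complex.I * (↑t : ℂ))))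
            * (2 * DP (Complex.exp (↑x : ℂ)) (Complex.exp (Complex.I * (↑t : ℂ)))
              * DXP (Complex.exp (↑x : ℂ)) (Complex.exp (Complex.I * (↑t : ℂ)))))
        / DP (Complex.exp (↑x : ℂ)) (Complex.exp (Complex.I * (↑t : ℂ))) ^ 4 := by
    have hEq : (fun y : ℝ => deriv (fun z => u₁ z t / u₂ z t) y) =ᶠ[nhds x]
        (fun y : ℝ => (NXP (Complex.exp (↑y : ℂ)) (Complex.exp (Complex.I * (↑t : ℂ)))
              * DP (Complex.exp (↑y : ℂ)) (Complex.exp (Complex.I * (↑t : ℂ)))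
            - NP (Complex.exp (↑y : ℂ)) (Complex.exp (Complex.I * (↑t : ℂ)))
              * DXP (Complex.exp (↑y : ℂ)) (Complex.exp (Complex.I * (↑t : ℂ))))
          / DP (Complex.exp (↑y : ℂ)) (Complex.exp (Complex.I * (↑t : ℂ))) ^ 2) := by
      filter_upwards [hev] with y hy
      have hfun : (fun z : ℝ => u₁ z t / u₂ z t)
          = (fun z : ℝ => NP (Complex.exp (↑z : ℂ)) (Complex.exp (Complex.I * (↑t : ℂ)))
              / DP (Complex.exp (↑z : ℂ)) (Complex.exp (Complex.I * (↑t : ℂ)))) := by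
        funext z; rw [u1_eq, u2_eq]
      rw [hfun]
      exact ((Lx_NP (Complex.exp (Complex.I * (↑t : ℂ))) y).div
        (Lx_DP (Complex.exp (Complex.I * (↑t : ℂ))) y) hy).deriv
    rw [hEq.deriv_eq]
    have hnum := ((Lx_NXP (Complex.exp (Complex.I * (↑t : ℂ))) x).mul
        (Lx_DP (Complex.exp (Complex.I * (↑t : ℂ))) x)).sub
      ((Lx_NP (Complex.exp (Complex.I * (↑t : ℂ))) x).mul
        (Lx_DXP (Complex.exp (Complex.I * (↑t : ℂ))) x))
    have hden := hasDerivAt_powc (Lx_DP (Complex.exp (Complex.I * (↑t : ℂ))) x) 2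
    have hq := hnum.div hden (pow_ne_zero 2 hD)
    exact hq.deriv.trans (by simp only [Pi.mul_apply, Pi.sub_apply]; push_cast; ring)
  rw [h1, h2, u1_eq, u2_eq, normsq_cast, map_div₀,
    conj_NP _ _ hca hb2 hb0, conj_DP _ _ hca hb2 hb0]
  have hDC : DCP (Complex.exp (↑x : ℂ)) (Complex.exp (Complex.I * (↑t : ℂ))) ≠ 0 := by
    intro hz
    apply hD
    have hc1 : (starRingEnd ℂ)
        (DP (Complex.exp (↑x : ℂ)) (Complex.exp (Complex.I * (↑t : ℂ)))) = 0 := by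
      rw [conj_DP _ _ hca hb2 hb0, hz, zero_div]
    have h3 := congrArg (starRingEnd ℂ) hc1
    simpa using h3
  exact key _ _ _ _ _ _ _ _ _ _ _ hD hDC hb0 (hpoly_all _ _)

end
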